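/- Under the hypotheses of the synchronous fixed point theorem with gcd(m, r) = 1 (complete metric space, closed covering sets, synchronous r-cyclic contraction with constant c), the unique fixed point x* lies in the intersection ⋂_{i=1}^m X_i; in particular this intersection is nonempty. -/

import Mathlib

theorem synchronous_fixed_point_in_intersection {α : Type*} [MetricSpace α] [CompleteSpace α]
    (m r : ℕ) (hm : 2 ≤ m) (hr : 1 ≤ r) (hrm : r < m) (hgcd : Nat.gcd m r = 1)
    (X : ZMod m → Set α) (hne : ∀ i, (X i).Nonempty) (hcl : ∀ i, IsClosed (X i))
    (hcov : (⋃ i, X i) = Set.univ) (f : α → α)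
    (hcyc : ∀ i, ∀ x ∈ X i, f x ∈ X (i + (r : ZMod m)))
    (c : ℝ) (hc0 : 0 ≤ c) (hc1 : c < 1)
    (hcontr : ∀ i, ∀ x ∈ X i, ∀ y ∈ X (i + (r : ZMod m)),
      dist (f x) (f y) ≤ c * dist x y) :
    ∃ xs : α, f xs = xs ∧ (∀ y, f y = y → y = xs) ∧ xs ∈ ⋂ i, X i := by
  haveI : NeZero m := ⟨by omega⟩
  have hcop : Nat.Coprime r m := Nat.Coprime.symm (by simpa [Nat.Coprime] using hgcd)
  set u : (ZMod m)ˣ := ZMod.unitOfCoprime r hcop with hu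
  have hval : (u : ZMod m) = (r : ZMod m) := rfl
  have hsurj : ∀ t : ZMod m, ∃ k : ℕ, (k : ZMod m) * (r : ZMod m) = t := by
    intro t
    refine ⟨(t * (↑u⁻¹ : ZMod m)).val, ?_⟩
    rw [ZMod.natCast_val, ZMod.cast_id]
    calc t * ↑u⁻¹ * (r : ZMod m) = t * (↑u⁻¹ * ↑u) := by rw [← hval]; ring
    _ = t := by rw [u.inv_mul, mul_one]
  obtain ⟨x0, hx0⟩ := hne 0
  set x : ℕ → α := fun n => f^[n] x0 with hx
  have hxsucc : ∀ n, x (n + 1) = f (x n) := fun n => Function.iterate_succ_apply' f n x0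
  have hmem : ∀ n, x n ∈ X ((n * r : ℕ) : ZMod m) := by
    intro n
    induction n with
    | zero => simpa using (show x 0 ∈ X 0 from hx0)
    | succ n ih =>
      have := hcyc _ _ ih
      rw [hxsucc]
      convert this using 2
      push_cast
      ring
  have hmemadd : ∀ n, x (n + 1) ∈ X (((n * r : ℕ) : ZMod m) + (r : ZMod m)) := by
    intro n
    have := hmem (n + 1)
    convert this using 2
    push_cast
    ring
  set D := dist (x 0) (x 1) with hD
  have hd : ∀ n, dist (x n) (x (n + 1)) ≤ D * c ^ n := by
    intro n
    induction n with
    | zero => simp [hD]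
    | succ n ih =>
      have h1 : dist (x (n + 1)) (x (n + 2)) ≤ c * dist (x n) (x (n + 1)) := by
        have h2 := hcontr _ _ (hmem n) _ (hmemadd n)
        rwa [← hxsucc n, ← hxsucc (n + 1)] at h2
      calc dist (x (n + 1)) (x (n + 2)) ≤ c * dist (x n) (x (n + 1)) := h1
        _ ≤ c * (D * c ^ n) := by
            exact mul_le_mul_of_nonneg_left ih hc0
        _ = D * c ^ (n + 1) := by ring
  have hcauchy : CauchySeq x := cauchySeq_of_le_geometric c D hc1 hd
  obtain ⟨xs, hxs⟩ := cauchySeq_tendsto_of_complete hcauchy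
  have hxsall : ∀ j, xs ∈ X j := by
    intro j
    obtain ⟨k, hk⟩ := hsurj j
    have hsub : Filter.Tendsto (fun t : ℕ => x (k + t * m)) Filter.atTop (nhds xs) := by
      refine hxs.comp (Filter.tendsto_atTop_mono (fun t => ?_) Filter.tendsto_id)
      have hm1 : 1 ≤ m := by omega
      calc (t : ℕ) = t * 1 := (mul_one t).symm
        _ ≤ t * m := Nat.mul_le_mul_left t hm1
        _ ≤ k + t * m := Nat.le_add_left _ _
    refine (hcl j).mem_of_tendsto hsub (Filter.Eventually.of_forall fun t => ?_)
    have := hmem (k + t * m)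
    convert this using 2
    push_cast [ZMod.natCast_self]
    rw [← hk]
    ring
  have hdistlim : Filter.Tendsto (fun n => dist (x n) xs) Filter.atTop (nhds 0) :=
    tendsto_iff_dist_tendsto_zero.mp hxs
  have hflim : Filter.Tendsto (fun n => f (x n)) Filter.atTop (nhds (f xs)) := by
    rw [tendsto_iff_dist_tendsto_zero]
    apply squeeze_zero (fun n => dist_nonneg)
      (fun n => hcontr _ _ (hmem n) xs (hxsall _))
    have : Filter.Tendsto (fun n => c * dist (x n) xs) Filter.atTop (nhds (c * 0)) :=
      hdistlim.const_mul c
    simpa using this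
  have hflim' : Filter.Tendsto (fun n => f (x n)) Filter.atTop (nhds xs) := by
    have : Filter.Tendsto (fun n => x (n + 1)) Filter.atTop (nhds xs) :=
      hxs.comp (Filter.tendsto_add_atTop_nat 1)
    simpa [hxsucc] using this
  have hfix : f xs = xs := tendsto_nhds_unique hflim hflim'
  refine ⟨xs, hfix, ?_, Set.mem_iInter.mpr hxsall⟩
  intro y hy
  have hy0 : ∃ i, y ∈ X i := by
    have : y ∈ ⋃ i, X i := by rw [hcov]; trivial
    simpa using this
  obtain ⟨i0, hi0⟩ := hy0
  have hyn : ∀ n : ℕ, y ∈ X (i0 + (n * r : ℕ)) := by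
    intro n
    induction n with
    | zero => simpa using hi0
    | succ n ih =>
      have := hcyc _ _ ih
      rw [hy] at this
      convert this using 2
      push_cast
      ring
  have hyall : ∀ j, y ∈ X j := by
    intro j
    obtain ⟨k, hk⟩ := hsurj (j - i0)
    have := hyn k
    convert this using 2
    push_cast
    rw [hk]
    ring
  have hdy : dist y xs ≤ c * dist y xs := by
    calc dist y xs = dist (f y) (f xs) := by rw [hy, hfix]
    _ ≤ c * dist y xs := hcontr 0 y (hyall 0) xs (hxsall _)
  have : dist y xs = 0 := by nlinarith [dist_nonneg (x := y) (y := xs)]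
  exact dist_eq_zero.mp this
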